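/- arXiv:1510.04036 — 2 statements merged into one kernel-verified Lean document; each statement's English description precedes it below -/
import Mathlib

section
/- The Taylor complex of the path ideal I_{k,n} is a minimal free resolution; in particular the i-th total Betti number of I_{k,n} equals binomial(k^n, i+1) for 0 <= i, and the projective dimension of I_{k,n} is k^n - 1 (equivalently, the resolution of I_{k,n} has length k^n). -/
open MvPolynomial

/-- Edges of the complete `k`-ary tree of depth `n`. -/
abbrev TreeEdge (k n : ℕ) := Σ i : Fin n, (Fin (i.1 + 1) → Fin k)

/-- Leaves of the complete `k`-ary tree of depth `n`. -/
abbrev TreeLeaf (k n : ℕ) := Fin n → Fin k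

/-- The edge at depth `i+1` on the root-to-leaf path of the leaf `ℓ`. -/
def pathEdge {k n : ℕ} (ℓ : TreeLeaf k n) (i : Fin n) : TreeEdge k n :=
  ⟨i, fun t => ℓ ⟨t.1, lt_of_lt_of_le t.2 i.2⟩⟩

/-- The squarefree monomial of the unique root-to-leaf path of the leaf `ℓ`. -/
noncomputable def pathMonomial (K : Type) [Field K] {k n : ℕ} (ℓ : TreeLeaf k n) :
    MvPolynomial (TreeEdge k n) K :=
  ∏ i : Fin n, X (pathEdge ℓ i)

/-- The path ideal `I_{k,n}` of the complete `k`-ary tree. -/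
noncomputable def pathIdeal (K : Type) [Field K] (k n : ℕ) :
    Ideal (MvPolynomial (TreeEdge k n) K) :=
  Ideal.span (Set.range (pathMonomial K (k := k) (n := n)))

/-- A minimal graded free resolution of `S/I` with graded Betti numbers `b i j`. -/
structure MinGradedFreeRes (K : Type) [Field K] (σ : Type)
    (I : Ideal (MvPolynomial σ K)) (b : ℕ → ℕ → ℕ) : Type where
  d : ∀ i : ℕ,
    ((Σ j : ℕ, Fin (b (i + 1) j)) →₀ MvPolynomial σ K) →ₗ[MvPolynomial σ K]
    ((Σ j : ℕ, Fin (b i j)) →₀ MvPolynomial σ K)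
  aug : ((Σ j : ℕ, Fin (b 0 j)) →₀ MvPolynomial σ K) →ₗ[MvPolynomial σ K]
    (MvPolynomial σ K ⧸ I)
  aug_surjective : Function.Surjective aug
  exact_zero : LinearMap.ker aug = LinearMap.range (d 0)
  exact : ∀ i, LinearMap.ker (d i) = LinearMap.range (d (i + 1))
  graded : ∀ (i : ℕ) (v : Σ j : ℕ, Fin (b (i + 1) j)) (w : Σ j : ℕ, Fin (b i j)),
    (d i (Finsupp.single v 1)) w ≠ 0 →
      w.1 ≤ v.1 ∧ ((d i (Finsupp.single v 1)) w).IsHomogeneous (v.1 - w.1)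
  graded_aug : ∀ v : Σ j : ℕ, Fin (b 0 j), ∃ g : MvPolynomial σ K,
    g.IsHomogeneous v.1 ∧ aug (Finsupp.single v 1) = Ideal.Quotient.mk I g
  minimal : ∀ (i : ℕ) (v : Σ j : ℕ, Fin (b (i + 1) j)) (w : Σ j : ℕ, Fin (b i j)),
    constantCoeff ((d i (Finsupp.single v 1)) w) = 0
  betti_finite : (Function.support fun p : ℕ × ℕ => b p.1 p.2).Finite



open Finsupp LinearMap

section General

variable {R : Type} [CommRing R] {M : Type} [AddCommGroup M] [Module R M]

/-- Data of a free resolution of `M` by free modules `A i →₀ R`. -/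
structure FRes (R : Type) [CommRing R] (M : Type) [AddCommGroup M] [Module R M]
    (A : ℕ → Type) : Type 1 where
  d : ∀ i : ℕ, ((A (i+1)) →₀ R) →ₗ[R] ((A i) →₀ R)
  aug : ((A 0) →₀ R) →ₗ[R] M
  aug_surj : Function.Surjective aug
  exact0 : LinearMap.ker aug = LinearMap.range (d 0)
  exact : ∀ i, LinearMap.ker (d i) = LinearMap.range (d (i+1))

variable {A B : ℕ → Type}

theorem FRes.dd (F : FRes R M A) (i : ℕ) (x : A (i+2) →₀ R) :
    F.d i (F.d (i+1) x) = 0 := by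
  have : F.d (i+1) x ∈ LinearMap.range (F.d (i+1)) := LinearMap.mem_range_self _ x
  rw [← F.exact i] at this
  exact this

theorem FRes.aug_d (F : FRes R M A) (x : A 1 →₀ R) : F.aug (F.d 0 x) = 0 := by
  have : F.d 0 x ∈ LinearMap.range (F.d 0) := LinearMap.mem_range_self _ x
  rw [← F.exact0] at this
  exact this

/-- Lift a map from a free module through a map with large enough range. -/
noncomputable def liftAux {α : Type} {N P : Type} [AddCommGroup N] [Module R N]
    [AddCommGroup P] [Module R P]
    (f : (α →₀ R) →ₗ[R] P) (g : N →ₗ[R] P)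
    (h : ∀ a : α, f (Finsupp.single a 1) ∈ LinearMap.range g) :
    { h' : (α →₀ R) →ₗ[R] N // ∀ x, g (h' x) = f x } := by
  refine ⟨Finsupp.lsum R (fun a => LinearMap.toSpanSingleton R N ((h a).choose)), ?_⟩
  intro x
  have : g ∘ₗ (Finsupp.lsum R (fun a => LinearMap.toSpanSingleton R N ((h a).choose))) = f := by
    apply Finsupp.lhom_ext
    intro a b
    have hb : Finsupp.single a b = b • Finsupp.single a (1 : R) := by
      rw [Finsupp.smul_single, smul_eq_mul, mul_one]
    rw [hb]
    simp only [LinearMap.comp_apply, map_smul]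
    rw [Finsupp.lsum_single, LinearMap.toSpanSingleton_apply, one_smul, (h a).choose_spec]
  exact congrArg (fun f => f x) this

variable (F : FRes R M A) (G : FRes R M B)

/-- The zeroth map of a comparison chain map. -/
noncomputable def chain0 : ((A 0) →₀ R) →ₗ[R] ((B 0) →₀ R) :=
  (liftAux F.aug G.aug (fun _ => by
    rw [LinearMap.range_eq_top.mpr G.aug_surj]; trivial)).1

theorem chain0_aug (x : (A 0) →₀ R) : G.aug (chain0 F G x) = F.aug x :=
  (liftAux F.aug G.aug _).2 x

/-- Recursive construction of the comparison chain map. -/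
noncomputable def chainSeq : ∀ i : ℕ,
    Σ' (p : ((A i) →₀ R) →ₗ[R] ((B i) →₀ R))
       (q : ((A (i+1)) →₀ R) →ₗ[R] ((B (i+1)) →₀ R)),
       PLift (∀ x, G.d i (q x) = p (F.d i x))
  | 0 =>
    ⟨chain0 F G,
     (liftAux ((chain0 F G) ∘ₗ F.d 0) (G.d 0) (fun a => by
        rw [← G.exact0, LinearMap.mem_ker, LinearMap.comp_apply, chain0_aug, F.aug_d])).1,
     PLift.up (liftAux ((chain0 F G) ∘ₗ F.d 0) (G.d 0) _).2⟩
  | (i+1) =>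
    let s := chainSeq i
    ⟨s.2.1,
     (liftAux (s.2.1 ∘ₗ F.d (i+1)) (G.d (i+1)) (fun a => by
        rw [← G.exact i, LinearMap.mem_ker, LinearMap.comp_apply, s.2.2.down, F.dd,
          map_zero])).1,
     PLift.up (liftAux (s.2.1 ∘ₗ F.d (i+1)) (G.d (i+1)) _).2⟩

theorem chainSeq_succ_fst (i : ℕ) :
    (chainSeq F G (i+1)).1 = (chainSeq F G i).2.1 := by
  rw [chainSeq]

/-- Comparison chain map between two resolutions of the same module. -/
theorem exists_chainMap :
    ∃ φ : ∀ i, ((A i) →₀ R) →ₗ[R] ((B i) →₀ R),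
      (∀ x, G.aug (φ 0 x) = F.aug x) ∧
      ∀ i, ∀ x, G.d i (φ (i+1) x) = φ i (F.d i x) := by
  refine ⟨fun i => (chainSeq F G i).1, ?_, ?_⟩
  · intro x
    show G.aug ((chainSeq F G 0).1 x) = F.aug x
    have h0 : (chainSeq F G 0).1 = chain0 F G := by rw [chainSeq]
    rw [h0]
    exact chain0_aug F G x
  · intro i x
    show G.d i ((chainSeq F G (i+1)).1 x) = (chainSeq F G i).1 (F.d i x)
    rw [chainSeq_succ_fst]
    exact (chainSeq F G i).2.2.down x


section Homotopy

variable (χ : ∀ i, ((A i) →₀ R) →ₗ[R] ((A i) →₀ R))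

/-- The zeroth homotopy map. -/
noncomputable def htpy0 (haug : ∀ x, F.aug (χ 0 x) = F.aug x) :
    { p : ((A 0) →₀ R) →ₗ[R] ((A 1) →₀ R) // ∀ x, F.d 0 (p x) = χ 0 x - x } :=
  liftAux (χ 0 - LinearMap.id) (F.d 0) (fun a => by
    rw [← F.exact0, LinearMap.mem_ker, LinearMap.sub_apply, map_sub, haug,
      LinearMap.id_apply, sub_self])

/-- Recursive construction of the contracting homotopy between a chain self-map
lifting the identity, and the identity. -/
noncomputable def htpySeq (haug : ∀ x, F.aug (χ 0 x) = F.aug x)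
    (hcomm : ∀ i x, F.d i (χ (i+1) x) = χ i (F.d i x)) : ∀ i : ℕ,
    Σ' (p : ((A i) →₀ R) →ₗ[R] ((A (i+1)) →₀ R))
       (q : ((A (i+1)) →₀ R) →ₗ[R] ((A (i+2)) →₀ R)),
       PLift (∀ x, χ (i+1) x - x = F.d (i+1) (q x) + p (F.d i x))
  | 0 =>
    let l := liftAux (χ 1 - LinearMap.id - (htpy0 F χ haug).1 ∘ₗ F.d 0) (F.d 1) (fun a => by
        rw [← F.exact 0, LinearMap.mem_ker]
        simp only [LinearMap.sub_apply, LinearMap.id_apply, LinearMap.comp_apply, map_sub]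
        rw [hcomm, (htpy0 F χ haug).2]
        abel)
    ⟨(htpy0 F χ haug).1, l.1, PLift.up (fun x => by
      have := l.2 x
      rw [this]
      simp only [LinearMap.sub_apply, LinearMap.id_apply, LinearMap.comp_apply]
      abel)⟩
  | (i+1) =>
    let s := htpySeq haug hcomm i
    let l := liftAux (χ (i+2) - LinearMap.id - s.2.1 ∘ₗ F.d (i+1)) (F.d (i+2))
        (fun a => by
        rw [← F.exact (i+1), LinearMap.mem_ker]
        simp only [LinearMap.sub_apply, LinearMap.id_apply, LinearMap.comp_apply, map_sub]
        rw [hcomm]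
        have h2 := s.2.2.down (F.d (i+1) (Finsupp.single a 1))
        rw [F.dd, map_zero, add_zero] at h2
        rw [← h2]
        abel)
    ⟨s.2.1, l.1, PLift.up (fun x => by
      have := l.2 x
      rw [this]
      simp only [LinearMap.sub_apply, LinearMap.id_apply, LinearMap.comp_apply]
      abel)⟩

theorem htpySeq_succ_fst (haug : ∀ x, F.aug (χ 0 x) = F.aug x)
    (hcomm : ∀ i x, F.d i (χ (i+1) x) = χ i (F.d i x)) (i : ℕ) :
    (htpySeq F χ haug hcomm (i+1)).1 = (htpySeq F χ haug hcomm i).2.1 := by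
  rw [htpySeq]

theorem exists_homotopy (haug : ∀ x, F.aug (χ 0 x) = F.aug x)
    (hcomm : ∀ i x, F.d i (χ (i+1) x) = χ i (F.d i x)) :
    ∃ h : ∀ i, ((A i) →₀ R) →ₗ[R] ((A (i+1)) →₀ R),
      (∀ x, χ 0 x - x = F.d 0 (h 0 x)) ∧
      ∀ i x, χ (i+1) x - x = F.d (i+1) (h (i+1) x) + h i (F.d i x) := by
  refine ⟨fun i => (htpySeq F χ haug hcomm i).1, ?_, ?_⟩
  · intro x
    show χ 0 x - x = F.d 0 ((htpySeq F χ haug hcomm 0).1 x)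
    have h0 : (htpySeq F χ haug hcomm 0).1 = (htpy0 F χ haug).1 := by rw [htpySeq]
    rw [h0, (htpy0 F χ haug).2]
  · intro i x
    show χ (i+1) x - x = F.d (i+1) ((htpySeq F χ haug hcomm (i+1)).1 x) +
      (htpySeq F χ haug hcomm i).1 (F.d i x)
    rw [htpySeq_succ_fst]
    exact (htpySeq F χ haug hcomm i).2.2.down x

end Homotopy

end General

section Red

variable (K : Type) [CommRing K] {R : Type} [CommRing R] [Algebra K R] (ε : R →ₐ[K] K)
variable {α β γ : Type}

/-- Reduce coefficients along `ε`. -/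
noncomputable def prK : (α →₀ R) →ₗ[K] (α →₀ K) :=
  Finsupp.mapRange.linearMap ε.toLinearMap

/-- Include coefficients along the algebra map. -/
noncomputable def embK : (α →₀ K) →ₗ[K] (α →₀ R) :=
  Finsupp.mapRange.linearMap (Algebra.linearMap K R)

/-- The reduction of a map of free modules modulo the "augmentation ideal" of `ε`. -/
noncomputable def red (f : (α →₀ R) →ₗ[R] (β →₀ R)) : (α →₀ K) →ₗ[K] (β →₀ K) :=
  prK K ε ∘ₗ (f.restrictScalars K) ∘ₗ embK K

lemma prK_apply (y : α →₀ R) (a : α) : prK K ε y a = ε (y a) := by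
  simp [prK, Finsupp.mapRange.linearMap_apply, Finsupp.mapRange_apply]

lemma embK_single (a : α) (c : K) :
    embK (R := R) K (Finsupp.single a c) = Finsupp.single a (algebraMap K R c) := by
  simp [embK, Finsupp.mapRange.linearMap_apply, Finsupp.mapRange_single]

lemma prK_rsmul (r : R) (y : α →₀ R) : prK K ε (r • y) = ε r • prK K ε y := by
  ext a
  simp [prK_apply, Finsupp.smul_apply, smul_eq_mul, map_mul]

lemma single_eq_smul_single_one (a : α) (r : R) :
    Finsupp.single a r = r • Finsupp.single a (1 : R) := by
  rw [Finsupp.smul_single, smul_eq_mul, mul_one]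

lemma red_apply_single (f : (α →₀ R) →ₗ[R] (β →₀ R)) (a : α) (c : K) :
    red K ε f (Finsupp.single a c) = ε (algebraMap K R c) • prK K ε (f (Finsupp.single a 1)) := by
  rw [red]
  simp only [LinearMap.comp_apply, LinearMap.restrictScalars_apply]
  rw [embK_single, single_eq_smul_single_one, map_smul, prK_rsmul]

lemma red_id : red K ε (LinearMap.id : (α →₀ R) →ₗ[R] (α →₀ R)) = LinearMap.id := by
  classical
  apply Finsupp.lhom_ext
  intro a c
  rw [red_apply_single]
  simp only [LinearMap.id_apply]
  rw [AlgHom.commutes]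
  ext b
  rw [Finsupp.smul_apply, prK_apply, Finsupp.single_apply, Finsupp.single_apply]
  split <;> simp

lemma red_comp (f : (α →₀ R) →ₗ[R] (β →₀ R)) (g : (β →₀ R) →ₗ[R] (γ →₀ R)) :
    red K ε (g ∘ₗ f) = red K ε g ∘ₗ red K ε f := by
  classical
  have key : ∀ y : β →₀ R, prK K ε (g (embK K (prK K ε y))) = prK K ε (g y) := by
    have h2 : (prK K ε ∘ₗ (g.restrictScalars K) ∘ₗ embK K ∘ₗ prK K ε)
        = (prK K ε ∘ₗ (g.restrictScalars K)) := by
      apply Finsupp.lhom_ext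
      intro b r
      simp only [LinearMap.comp_apply, LinearMap.restrictScalars_apply]
      have h1 : prK K ε (Finsupp.single b r) = Finsupp.single b (ε r) := by
        ext b'
        rw [prK_apply, Finsupp.single_apply, Finsupp.single_apply]
        split <;> simp
      rw [h1, embK_single, single_eq_smul_single_one, map_smul, prK_rsmul,
        single_eq_smul_single_one b r, map_smul, prK_rsmul, AlgHom.commutes,
        Algebra.algebraMap_self_apply]
    intro y
    exact congrArg (fun h => h y) h2
  apply Finsupp.lhom_ext
  intro a c
  simp only [red, LinearMap.comp_apply, LinearMap.restrictScalars_apply]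
  rw [key]

lemma red_eq_zero (f : (α →₀ R) →ₗ[R] (β →₀ R))
    (h : ∀ a b, ε ((f (Finsupp.single a 1)) b) = 0) : red K ε f = 0 := by
  apply Finsupp.lhom_ext
  intro a c
  rw [red_apply_single]
  have : prK K ε (f (Finsupp.single a 1)) = 0 := by
    ext b; simp [prK_apply, h]
  simp [this]

lemma red_sub (f g : (α →₀ R) →ₗ[R] (β →₀ R)) :
    red K ε (f - g) = red K ε f - red K ε g := by
  apply LinearMap.ext
  intro x
  simp [red, map_sub]

end Red

section Taylor

open Finsupp MvPolynomial

variable {k n : ℕ}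

/-- An arbitrary enumeration of the leaves, used for ordering. -/
noncomputable def lidx (ℓ : TreeLeaf k n) : ℕ := (Fintype.equivFin (TreeLeaf k n) ℓ : ℕ)

lemma lidx_injective : Function.Injective (lidx (k := k) (n := n)) := by
  intro x y h
  exact (Fintype.equivFin (TreeLeaf k n)).injective (Fin.ext h)

open scoped Classical

/-- Edge set of the path of a leaf. -/
noncomputable def ES (ℓ : TreeLeaf k n) : Finset (TreeEdge k n) :=
  Finset.image (pathEdge ℓ) Finset.univ

/-- Edge set of a set of paths. -/
noncomputable def ESs (s : Finset (TreeLeaf k n)) : Finset (TreeEdge k n) :=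
  s.biUnion ES

/-- The exponent vector of the lcm of the path monomials of `s`. -/
noncomputable def DD (s : Finset (TreeLeaf k n)) : TreeEdge k n →₀ ℕ :=
  ∑ e ∈ ESs s, Finsupp.single e 1

lemma DD_apply (s : Finset (TreeLeaf k n)) (e : TreeEdge k n) :
    DD s e = if e ∈ ESs s then 1 else 0 := by
  rw [DD, Finset.sum_apply']
  rw [Finset.sum_congr rfl (fun e' _ => Finsupp.single_apply (a := e') (b := 1) (a' := e))]
  exact Finset.sum_ite_eq' (ESs s) e (fun _ => 1)

lemma DD_mono {s t : Finset (TreeLeaf k n)} (h : s ⊆ t) : DD s ≤ DD t := by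
  rw [Finsupp.le_def]
  intro e
  rw [DD_apply, DD_apply]
  by_cases he : e ∈ ESs s
  · rw [if_pos he, if_pos]
    rw [ESs, Finset.mem_biUnion] at he ⊢
    obtain ⟨ℓ, hℓ, hm⟩ := he
    exact ⟨ℓ, h hℓ, hm⟩
  · rw [if_neg he]; exact Nat.zero_le _

lemma DD_empty : DD (∅ : Finset (TreeLeaf k n)) = 0 := by
  rw [DD]
  have h : ESs (∅ : Finset (TreeLeaf k n)) = ∅ := by simp [ESs]
  rw [h, Finset.sum_empty]

lemma ESs_singleton (ℓ : TreeLeaf k n) : ESs {ℓ} = ES ℓ := by rw [ESs, Finset.singleton_biUnion]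

lemma pathEdge_injective (ℓ : TreeLeaf k n) : Function.Injective (pathEdge ℓ) := by
  intro i j h
  exact congrArg Sigma.fst h

lemma pathMonomial_eq (K : Type) [Field K] (ℓ : TreeLeaf k n) :
    pathMonomial K ℓ = monomial (DD {ℓ}) 1 := by
  rw [pathMonomial]
  have aux : ∀ t : Finset (Fin n), (∏ i ∈ t, (X (pathEdge ℓ i) : MvPolynomial (TreeEdge k n) K))
      = monomial (∑ i ∈ t, Finsupp.single (pathEdge ℓ i) 1) 1 := by
    intro t
    induction t using Finset.induction_on with
    | empty => simp [monomial_zero']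
    | insert _ _ hne ih =>
      rw [Finset.prod_insert hne, Finset.sum_insert hne, ih, X, monomial_mul, one_mul]
  rw [aux Finset.univ]
  congr 1
  rw [DD, ESs_singleton, ES]
  rw [Finset.sum_image (fun i _ j _ h => pathEdge_injective ℓ h)]

/-- The deepest edge of a path determines the leaf. -/
lemma lastEdge_unique (hn : 1 ≤ n) (ℓ ℓ' : TreeLeaf k n)
    (h : pathEdge ℓ ⟨n-1, by omega⟩ ∈ ES ℓ') : ℓ' = ℓ := by
  rw [ES, Finset.mem_image] at h
  obtain ⟨i, -, hi⟩ := h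
  rw [pathEdge, pathEdge] at hi
  obtain ⟨h1, h2⟩ := Sigma.mk.inj_iff.mp hi
  rw [h1] at h2
  have h3 := eq_of_heq h2
  funext j
  have hj : j.1 < n - 1 + 1 := by omega
  have h4 := congrFun h3 ⟨j.1, hj⟩
  simpa using h4

lemma DD_erase_ne (hn : 1 ≤ n) {s : Finset (TreeLeaf k n)} {ℓ : TreeLeaf k n} (hℓ : ℓ ∈ s) :
    DD s - DD (s.erase ℓ) ≠ 0 := by
  intro h
  have h0 := congrArg (fun f => f (pathEdge ℓ ⟨n-1, by omega⟩)) h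
  simp only [Finsupp.tsub_apply, Finsupp.coe_zero, Pi.zero_apply] at h0
  have h1 : DD s (pathEdge ℓ ⟨n-1, by omega⟩) = 1 := by
    rw [DD_apply, if_pos]
    exact Finset.mem_biUnion.mpr ⟨ℓ, hℓ, Finset.mem_image.mpr ⟨_, Finset.mem_univ _, rfl⟩⟩
  have h2 : DD (s.erase ℓ) (pathEdge ℓ ⟨n-1, by omega⟩) = 0 := by
    rw [DD_apply, if_neg]
    intro hmem
    obtain ⟨ℓ', hℓ', hmem'⟩ := Finset.mem_biUnion.mp hmem
    exact (Finset.ne_of_mem_erase hℓ') (lastEdge_unique hn ℓ ℓ' hmem')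
  rw [h1, h2] at h0
  omega

variable (K : Type) [Field K]

/-- Sign of a leaf in a set of leaves. -/
noncomputable def sgn (ℓ : TreeLeaf k n) (s : Finset (TreeLeaf k n)) : K :=
  (-1 : K) ^ (s.filter (fun x => lidx x < lidx ℓ)).card

/-- The value of the Taylor differential on a basis vector. -/
noncomputable def dval (s : Finset (TreeLeaf k n)) :
    Finset (TreeLeaf k n) →₀ MvPolynomial (TreeEdge k n) K :=
  ∑ ℓ ∈ s, Finsupp.single (s.erase ℓ)
    (monomial (DD s - DD (s.erase ℓ)) (sgn K ℓ s))

/-- The global Taylor differential. -/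
noncomputable def Dg : (Finset (TreeLeaf k n) →₀ MvPolynomial (TreeEdge k n) K)
    →ₗ[MvPolynomial (TreeEdge k n) K]
    (Finset (TreeLeaf k n) →₀ MvPolynomial (TreeEdge k n) K) :=
  Finsupp.lsum (MvPolynomial (TreeEdge k n) K) fun s =>
    LinearMap.toSpanSingleton (MvPolynomial (TreeEdge k n) K) _ (dval K s)

lemma Dg_single (s : Finset (TreeLeaf k n)) (f : MvPolynomial (TreeEdge k n) K) :
    Dg K (Finsupp.single s f) = ∑ ℓ ∈ s, Finsupp.single (s.erase ℓ)
      (f * monomial (DD s - DD (s.erase ℓ)) (sgn K ℓ s)) := by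
  rw [Dg, Finsupp.lsum_single, LinearMap.toSpanSingleton_apply, dval, Finset.smul_sum]
  refine Finset.sum_congr rfl (fun ℓ _ => ?_)
  rw [Finsupp.smul_single, smul_eq_mul]

end Taylor

section TaylorH

open Finsupp MvPolynomial
open scoped Classical

variable {k n : ℕ} (K : Type) [Field K]

/-- Leaves whose path monomial divides `x^a * m_s`. -/
noncomputable def FsetT (a : TreeEdge k n →₀ ℕ) (s : Finset (TreeLeaf k n)) :
    Finset (TreeLeaf k n) :=
  Finset.univ.filter (fun ℓ => DD {ℓ} ≤ a + DD s)

lemma mem_FsetT {a : TreeEdge k n →₀ ℕ} {s : Finset (TreeLeaf k n)} {ℓ : TreeLeaf k n} :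
    ℓ ∈ FsetT a s ↔ DD {ℓ} ≤ a + DD s := by
  rw [FsetT, Finset.mem_filter]
  simp

lemma subset_FsetT (a : TreeEdge k n →₀ ℕ) (s : Finset (TreeLeaf k n)) : s ⊆ FsetT a s :=
  fun ℓ hℓ => mem_FsetT.mpr
    (le_trans (DD_mono (Finset.singleton_subset_iff.mpr hℓ)) le_add_self)

/-- The element of a nonempty finite set of leaves with least index. -/
noncomputable def vsel (F : Finset (TreeLeaf k n)) (h : F.Nonempty) : TreeLeaf k n :=
  (Fintype.equivFin (TreeLeaf k n)).symm
    ((F.image (Fintype.equivFin (TreeLeaf k n))).min' (h.image _))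

lemma vsel_mem (F : Finset (TreeLeaf k n)) (h : F.Nonempty) : vsel F h ∈ F := by
  have hm := Finset.min'_mem (F.image (Fintype.equivFin (TreeLeaf k n))) (h.image _)
  obtain ⟨ℓ, hℓ, he⟩ := Finset.mem_image.mp hm
  rw [vsel, ← he, Equiv.symm_apply_apply]
  exact hℓ

lemma vsel_le (F : Finset (TreeLeaf k n)) (h : F.Nonempty) {x : TreeLeaf k n} (hx : x ∈ F) :
    lidx (vsel F h) ≤ lidx x := by
  have hle := Finset.min'_le (F.image (Fintype.equivFin (TreeLeaf k n)))
    (Fintype.equivFin (TreeLeaf k n) x) (Finset.mem_image_of_mem _ hx)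
  have hval : lidx (vsel F h) = ((F.image (Fintype.equivFin (TreeLeaf k n))).min' (h.image _) : ℕ) := by
    rw [vsel, lidx, Equiv.apply_symm_apply]
  rw [hval]
  exact_mod_cast hle

/-- The value of the contracting homotopy on a basis vector. -/
noncomputable def Hval (s : Finset (TreeLeaf k n)) (a : TreeEdge k n →₀ ℕ) :
    Finset (TreeLeaf k n) →₀ MvPolynomial (TreeEdge k n) K :=
  if h : (FsetT a s).Nonempty then
    if vsel (FsetT a s) h ∈ s then 0
    else Finsupp.single (insert (vsel (FsetT a s) h) s)
      (monomial ((a + DD s) - DD (insert (vsel (FsetT a s) h) s)) 1)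
  else 0

/-- The global contracting homotopy (only `K`-linear). -/
noncomputable def Hg : (Finset (TreeLeaf k n) →₀ MvPolynomial (TreeEdge k n) K)
    →ₗ[K] (Finset (TreeLeaf k n) →₀ MvPolynomial (TreeEdge k n) K) :=
  ((Finsupp.basis fun _ : Finset (TreeLeaf k n) => basisMonomials (TreeEdge k n) K).constr K)
    (fun p => Hval K p.1 p.2)

lemma basis_eq (s : Finset (TreeLeaf k n)) (a : TreeEdge k n →₀ ℕ) :
    (Finsupp.basis fun _ : Finset (TreeLeaf k n) => basisMonomials (TreeEdge k n) K)
      (⟨s, a⟩ : Σ _ : Finset (TreeLeaf k n), (TreeEdge k n →₀ ℕ))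
      = Finsupp.single s (monomial a 1) := by
  rw [Finsupp.coe_basis]
  simp [coe_basisMonomials]

lemma Hg_basis (s : Finset (TreeLeaf k n)) (a : TreeEdge k n →₀ ℕ) :
    Hg K (Finsupp.single s (monomial a 1)) = Hval K s a := by
  rw [← basis_eq]
  exact Module.Basis.constr_basis _ K _ _

lemma Hg_single_monomial (t : Finset (TreeLeaf k n)) (b : TreeEdge k n →₀ ℕ) (c : K) :
    Hg K (Finsupp.single t (monomial b c)) = c • Hval K t b := by
  have h : Finsupp.single t (monomial b c) = c • Finsupp.single t (monomial b (1 : K)) := by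
    rw [Finsupp.smul_single, smul_monomial, smul_eq_mul, mul_one]
  rw [h, map_smul, Hg_basis]

lemma Hval_eq (t : Finset (TreeLeaf k n)) (b : TreeEdge k n →₀ ℕ) (w : TreeLeaf k n)
    (hw : w ∈ FsetT b t) (hmin : ∀ x ∈ FsetT b t, lidx w ≤ lidx x) :
    Hval K t b = if w ∈ t then 0
      else Finsupp.single (insert w t) (monomial ((b + DD t) - DD (insert w t)) 1) := by
  have hne : (FsetT b t).Nonempty := ⟨w, hw⟩
  have hmw : vsel (FsetT b t) hne = w :=
    lidx_injective (le_antisymm (vsel_le _ hne hw) (hmin _ (vsel_mem _ hne)))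
  rw [Hval, dif_pos hne, hmw]

lemma sgn_eq_one {v : TreeLeaf k n} {s : Finset (TreeLeaf k n)}
    (h : ∀ x ∈ s, lidx v ≤ lidx x) : sgn K v s = 1 := by
  rw [sgn]
  have he : s.filter (fun x => lidx x < lidx v) = ∅ :=
    Finset.filter_eq_empty_iff.mpr (fun {x} hx => not_lt.mpr (h x hx))
  rw [he, Finset.card_empty, pow_zero]

lemma sgn_insert {v ℓ : TreeLeaf k n} {s : Finset (TreeLeaf k n)} (hv : v ∉ s)
    (hle : ∀ x ∈ s, lidx v ≤ lidx x) (hℓ : ℓ ∈ s) : sgn K ℓ (insert v s) = - sgn K ℓ s := by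
  have hvne : v ≠ ℓ := fun h => hv (h ▸ hℓ)
  have hvℓ : lidx v < lidx ℓ :=
    lt_of_le_of_ne (hle ℓ hℓ) (fun h => hvne (lidx_injective h))
  rw [sgn, sgn, Finset.filter_insert, if_pos hvℓ,
    Finset.card_insert_of_notMem (fun h => hv (Finset.mem_of_mem_filter v h)),
    pow_succ]
  ring

lemma DD_insert_le {v : TreeLeaf k n} {s : Finset (TreeLeaf k n)} {a : TreeEdge k n →₀ ℕ}
    (h : DD {v} ≤ a + DD s) : DD (insert v s) ≤ a + DD s := by
  rw [Finsupp.le_def]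
  intro e
  rw [DD_apply]
  by_cases he : e ∈ ESs (insert v s)
  · rw [if_pos he]
    rw [ESs, Finset.mem_biUnion] at he
    obtain ⟨ℓ, hℓ, hm⟩ := he
    rcases Finset.mem_insert.mp hℓ with h1 | h1
    · subst h1
      have := Finsupp.le_def.mp h e
      rw [DD_apply, ESs_singleton, if_pos hm] at this
      exact this
    · have h2 : DD s e = 1 := by
        rw [DD_apply, if_pos]
        rw [ESs, Finset.mem_biUnion]
        exact ⟨ℓ, h1, hm⟩
      rw [Finsupp.add_apply, h2]
      omega
  · rw [if_neg he]
    exact Nat.zero_le _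

set_option maxHeartbeats 1600000 in
/-- The fundamental homotopy identity on basis vectors of the nonempty levels. -/
lemma taylor_homotopy (s : Finset (TreeLeaf k n)) (hs : s.Nonempty) (a : TreeEdge k n →₀ ℕ) :
    Dg K (Hg K (Finsupp.single s (monomial a 1)))
      + Hg K (Dg K (Finsupp.single s (monomial a 1)))
      = Finsupp.single s (monomial a 1) := by
  obtain ⟨ℓ0, hℓ0⟩ := hs
  have hsub : s ⊆ FsetT a s := subset_FsetT a s
  have hne : (FsetT a s).Nonempty := ⟨ℓ0, hsub hℓ0⟩
  set v := vsel (FsetT a s) hne with hv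
  have hvmin : ∀ x ∈ FsetT a s, lidx v ≤ lidx x := fun x hx => vsel_le _ hne hx
  have hvles : ∀ x ∈ s, lidx v ≤ lidx x := fun x hx => hvmin x (hsub hx)
  have hvF : v ∈ FsetT a s := vsel_mem _ hne
  have hFinv : ∀ ℓ ∈ s, FsetT (a + (DD s - DD (s.erase ℓ))) (s.erase ℓ) = FsetT a s := by
    intro ℓ hℓ
    ext ℓ'
    rw [mem_FsetT, mem_FsetT, add_assoc,
      tsub_add_cancel_of_le (DD_mono (Finset.erase_subset ℓ s))]
  have hDg2 : Dg K (Finsupp.single s (monomial a 1)) = ∑ ℓ ∈ s, Finsupp.single (s.erase ℓ)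
      (monomial (a + (DD s - DD (s.erase ℓ))) (sgn K ℓ s)) := by
    rw [Dg_single]
    refine Finset.sum_congr rfl (fun ℓ _ => ?_)
    rw [monomial_mul, one_mul]
  have hHd : Hg K (Dg K (Finsupp.single s (monomial a 1))) = ∑ ℓ ∈ s,
      sgn K ℓ s • Hval K (s.erase ℓ) (a + (DD s - DD (s.erase ℓ))) := by
    rw [hDg2, map_sum]
    exact Finset.sum_congr rfl (fun ℓ _ => Hg_single_monomial K _ _ _)
  have hHs : Hg K (Finsupp.single s (monomial a 1))
      = if v ∈ s then 0
        else Finsupp.single (insert v s) (monomial ((a + DD s) - DD (insert v s)) 1) := by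
    rw [Hg_basis]
    exact Hval_eq K s a v hvF hvmin
  by_cases hvs : v ∈ s
  · -- the minimum vertex is in `s` : the `Hd` sum contributes exactly the basis vector
    rw [hHs, if_pos hvs, map_zero, zero_add, hHd]
    rw [Finset.sum_eq_single_of_mem v hvs (fun ℓ hℓ hne' => by
      have hF' := hFinv ℓ hℓ
      have hw : v ∈ FsetT (a + (DD s - DD (s.erase ℓ))) (s.erase ℓ) := by
        rw [hF']; exact hvF
      have hm : ∀ x ∈ FsetT (a + (DD s - DD (s.erase ℓ))) (s.erase ℓ), lidx v ≤ lidx x := by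
        rw [hF']; exact hvmin
      rw [Hval_eq K _ _ v hw hm,
        if_pos (Finset.mem_erase.mpr ⟨fun h => hne' h.symm, hvs⟩), smul_zero])]
    have hF' := hFinv v hvs
    have hw : v ∈ FsetT (a + (DD s - DD (s.erase v))) (s.erase v) := by
      rw [hF']; exact hvF
    have hm : ∀ x ∈ FsetT (a + (DD s - DD (s.erase v))) (s.erase v), lidx v ≤ lidx x := by
      rw [hF']; exact hvmin
    rw [Hval_eq K _ _ v hw hm,
      if_neg (Finset.notMem_erase v s), sgn_eq_one K hvles, one_smul,
      Finset.insert_erase hvs]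
    congr 1
    rw [add_assoc, tsub_add_cancel_of_le (DD_mono (Finset.erase_subset v s)),
      add_tsub_cancel_right]
  · -- the minimum vertex is not in `s`
    have hDDins : DD (insert v s) ≤ a + DD s := DD_insert_le (mem_FsetT.mp hvF)
    have hDDs : DD s ≤ DD (insert v s) := DD_mono (Finset.subset_insert v s)
    have hDg3 : Dg K (Finsupp.single (insert v s)
        (monomial ((a + DD s) - DD (insert v s)) 1))
        = ∑ ℓ ∈ insert v s, Finsupp.single ((insert v s).erase ℓ)
          (monomial (((a + DD s) - DD (insert v s)) +
            (DD (insert v s) - DD ((insert v s).erase ℓ))) (sgn K ℓ (insert v s))) := by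
      rw [Dg_single]
      refine Finset.sum_congr rfl (fun ℓ _ => ?_)
      rw [monomial_mul, one_mul]
    rw [hHs, if_neg hvs, hHd, hDg3, Finset.sum_insert hvs]
    have hhead : Finsupp.single ((insert v s).erase v)
        ((monomial (((a + DD s) - DD (insert v s)) +
          (DD (insert v s) - DD ((insert v s).erase v)))) (sgn K v (insert v s)))
        = Finsupp.single s (monomial a 1) := by
      rw [Finset.erase_insert hvs]
      rw [sgn_eq_one K (fun x hx => by
        rcases Finset.mem_insert.mp hx with h2 | h2
        · exact le_of_eq (congrArg lidx h2.symm)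
        · exact hvles x h2)]
      rw [tsub_add_tsub_cancel hDDins hDDs, add_tsub_cancel_right]
    rw [hhead, add_assoc, ← Finset.sum_add_distrib]
    rw [Finset.sum_eq_zero (fun ℓ hℓ => by
      have hvne : v ≠ ℓ := fun h => hvs (h ▸ hℓ)
      have hF' := hFinv ℓ hℓ
      have hvnes : v ∉ s.erase ℓ := fun h => hvs (Finset.mem_of_mem_erase h)
      have hw : v ∈ FsetT (a + (DD s - DD (s.erase ℓ))) (s.erase ℓ) := by
        rw [hF']; exact hvF
      have hm : ∀ x ∈ FsetT (a + (DD s - DD (s.erase ℓ))) (s.erase ℓ), lidx v ≤ lidx x := by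
        rw [hF']; exact hvmin
      rw [Hval_eq K _ _ v hw hm, if_neg hvnes]
      rw [Finsupp.smul_single, smul_monomial, smul_eq_mul, mul_one]
      rw [Finset.erase_insert_of_ne hvne]
      have hexp1 : ((a + DD s) - DD (insert v s)) +
          (DD (insert v s) - DD (insert v (s.erase ℓ)))
          = (a + DD s) - DD (insert v (s.erase ℓ)) := by
        apply tsub_add_tsub_cancel hDDins
        apply DD_mono
        intro x hx
        rcases Finset.mem_insert.mp hx with h2 | h2
        · exact h2 ▸ Finset.mem_insert_self v s
        · exact Finset.mem_insert_of_mem (Finset.mem_of_mem_erase h2)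
      have hexp2 : ((a + (DD s - DD (s.erase ℓ))) + DD (s.erase ℓ))
          - DD (insert v (s.erase ℓ))
          = (a + DD s) - DD (insert v (s.erase ℓ)) := by
        rw [add_assoc, tsub_add_cancel_of_le (DD_mono (Finset.erase_subset ℓ s))]
      rw [hexp1, hexp2, sgn_insert K hvs hvles hℓ]
      rw [← Finsupp.single_add]
      have hz : (monomial ((a + DD s) - DD (insert v (s.erase ℓ)))) (-sgn K ℓ s)
          + (monomial ((a + DD s) - DD (insert v (s.erase ℓ)))) (sgn K ℓ s) = 0 := by
        rw [← map_add, neg_add_cancel, map_zero]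
      rw [hz, Finsupp.single_zero])]
    rw [add_zero]

end TaylorH

section TaylorDD

open Finsupp MvPolynomial
open scoped Classical

variable {k n : ℕ} (K : Type) [Field K]

lemma sgn_mul_antisymm_aux {s : Finset (TreeLeaf k n)} {ℓ ℓ' : TreeLeaf k n}
    (hℓ' : ℓ' ∈ s) (hlt : lidx ℓ' < lidx ℓ) :
    sgn K ℓ s * sgn K ℓ' (s.erase ℓ) = - (sgn K ℓ' s * sgn K ℓ (s.erase ℓ')) := by
  have h1 : sgn K ℓ' (s.erase ℓ) = sgn K ℓ' s := by
    rw [sgn, sgn, Finset.filter_erase, Finset.erase_eq_of_notMem]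
    intro h
    exact absurd (Finset.mem_filter.mp h).2 (not_lt.mpr hlt.le)
  have hmem : ℓ' ∈ s.filter (fun x => lidx x < lidx ℓ) :=
    Finset.mem_filter.mpr ⟨hℓ', hlt⟩
  have hc : 1 ≤ (s.filter (fun x => lidx x < lidx ℓ)).card :=
    Finset.card_pos.mpr ⟨ℓ', hmem⟩
  have h2 : sgn K ℓ (s.erase ℓ') = (-1 : K) ^ ((s.filter (fun x => lidx x < lidx ℓ)).card - 1) := by
    rw [sgn, Finset.filter_erase, Finset.card_erase_of_mem hmem]
  have h3 : sgn K ℓ s = -(-1 : K) ^ ((s.filter (fun x => lidx x < lidx ℓ)).card - 1) := by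
    obtain ⟨m, hm⟩ : ∃ m, (s.filter (fun x => lidx x < lidx ℓ)).card = m + 1 :=
      ⟨(s.filter (fun x => lidx x < lidx ℓ)).card - 1, by omega⟩
    rw [sgn, hm, pow_succ, Nat.add_sub_cancel]
    ring
  rw [h1, h2, h3]
  ring

lemma sgn_mul_antisymm {s : Finset (TreeLeaf k n)} {ℓ ℓ' : TreeLeaf k n}
    (hℓ : ℓ ∈ s) (hℓ' : ℓ' ∈ s) (hne : ℓ ≠ ℓ') :
    sgn K ℓ s * sgn K ℓ' (s.erase ℓ) + sgn K ℓ' s * sgn K ℓ (s.erase ℓ') = 0 := by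
  have hidx : lidx ℓ ≠ lidx ℓ' := fun h => hne (lidx_injective h)
  rcases lt_or_gt_of_ne hidx with h | h
  · rw [sgn_mul_antisymm_aux K hℓ h]
    ring
  · rw [sgn_mul_antisymm_aux K hℓ' h]
    ring

lemma sum_erase_eq_ite {α M : Type} [DecidableEq α] [AddCommMonoid M] (s : Finset α) (a : α)
    (f : α → M) : ∑ x ∈ s.erase a, f x = ∑ x ∈ s, if x ≠ a then f x else 0 := by
  rw [← Finset.filter_ne', Finset.sum_filter]

lemma Dg_Dg_single (s : Finset (TreeLeaf k n)) :
    Dg K (Dg K (Finsupp.single s (1 : MvPolynomial (TreeEdge k n) K))) = 0 := by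
  rw [Dg_single]
  rw [map_sum]
  have hstep : ∀ ℓ ∈ s, Dg K (Finsupp.single (s.erase ℓ)
      (1 * monomial (DD s - DD (s.erase ℓ)) (sgn K ℓ s)))
      = ∑ ℓ' ∈ s, (if ℓ' ≠ ℓ then Finsupp.single ((s.erase ℓ).erase ℓ')
          (monomial (DD s - DD ((s.erase ℓ).erase ℓ'))
            (sgn K ℓ s * sgn K ℓ' (s.erase ℓ))) else 0) := by
    intro ℓ hℓ
    rw [one_mul, Dg_single, sum_erase_eq_ite]
    refine Finset.sum_congr rfl (fun ℓ' _ => ?_)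
    by_cases hne : ℓ' ≠ ℓ
    · rw [if_pos hne, if_pos hne, monomial_mul]
      have he : (DD s - DD (s.erase ℓ)) + (DD (s.erase ℓ) - DD ((s.erase ℓ).erase ℓ'))
          = DD s - DD ((s.erase ℓ).erase ℓ') :=
        tsub_add_tsub_cancel (DD_mono (Finset.erase_subset ℓ s))
          (DD_mono (Finset.erase_subset ℓ' (s.erase ℓ)))
      rw [he]
    · rw [if_neg hne, if_neg hne]
  rw [Finset.sum_congr rfl hstep]
  rw [← Finset.sum_product']
  apply Finset.sum_involution (fun p _ => (p.2, p.1))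
  · intro p hp
    rcases Finset.mem_product.mp hp with ⟨h1, h2⟩
    by_cases hne : p.2 ≠ p.1
    · rw [if_pos hne, if_pos hne.symm]
      rw [Finset.erase_right_comm (a := p.2) (b := p.1)]
      rw [← Finsupp.single_add, ← map_add, sgn_mul_antisymm K h1 h2 (fun h => hne h.symm),
        map_zero, Finsupp.single_zero]
    · rw [if_neg hne, if_neg (fun h => hne (fun h2 => h h2.symm)), add_zero]
  · intro p hp hne
    intro hcontra
    have h1 : p.2 = p.1 := congrArg Prod.fst hcontra
    rw [if_neg (fun h => h h1)] at hne
    exact hne rfl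
  · intro p hp
    rcases Finset.mem_product.mp hp with ⟨h1, h2⟩
    exact Finset.mem_product.mpr ⟨h2, h1⟩
  · intro p hp
    rfl

lemma Dg_Dg (x : Finset (TreeLeaf k n) →₀ MvPolynomial (TreeEdge k n) K) :
    Dg K (Dg K x) = 0 := by
  have h : (Dg K ∘ₗ Dg K) = (0 : (Finset (TreeLeaf k n) →₀ MvPolynomial (TreeEdge k n) K)
      →ₗ[MvPolynomial (TreeEdge k n) K] _) := by
    apply Finsupp.lhom_ext
    intro s f
    have hf : Finsupp.single s f = f • Finsupp.single s (1 : MvPolynomial (TreeEdge k n) K) := by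
      rw [Finsupp.smul_single, smul_eq_mul, mul_one]
    rw [LinearMap.comp_apply, hf, map_smul, map_smul, Dg_Dg_single, smul_zero]
    rfl
  exact congrArg (fun f => f x) h

end TaylorDD

section TaylorAssemble

open Finsupp MvPolynomial
open scoped Classical

variable {k n : ℕ} (K : Type) [Field K]

/-- Index type of the `i`-th term of the Taylor resolution. -/
abbrev Lam (k n i : ℕ) : Type := {s : Finset (TreeLeaf k n) // s.card = i}

/-- Inclusion of the `i`-th level into the total module. -/
noncomputable def iot (i : ℕ) :
    (Lam k n i →₀ MvPolynomial (TreeEdge k n) K) →ₗ[MvPolynomial (TreeEdge k n) K]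
    (Finset (TreeLeaf k n) →₀ MvPolynomial (TreeEdge k n) K) :=
  Finsupp.lmapDomain _ _ Subtype.val

/-- Projection of the total module onto the `i`-th level. -/
noncomputable def projT (i : ℕ) :
    (Finset (TreeLeaf k n) →₀ MvPolynomial (TreeEdge k n) K) →ₗ[MvPolynomial (TreeEdge k n) K]
    (Lam k n i →₀ MvPolynomial (TreeEdge k n) K) :=
  Finsupp.lsum (MvPolynomial (TreeEdge k n) K) fun s =>
    if h : s.card = i then Finsupp.lsingle ⟨s, h⟩ else 0

lemma iot_single (i : ℕ) (p : Lam k n i) (f : MvPolynomial (TreeEdge k n) K) :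
    iot K i (Finsupp.single p f) = Finsupp.single p.val f := by
  rw [iot, Finsupp.lmapDomain_apply, Finsupp.mapDomain_single]

lemma iot_inj (i : ℕ) : Function.Injective (iot K (k := k) (n := n) i) := by
  rw [iot]
  intro x y h
  exact Finsupp.mapDomain_injective Subtype.val_injective
    (by simpa [Finsupp.lmapDomain_apply] using h)

lemma projT_single (i : ℕ) (s : Finset (TreeLeaf k n)) (f : MvPolynomial (TreeEdge k n) K) :
    projT K i (Finsupp.single s f)
      = if h : s.card = i then Finsupp.single (⟨s, h⟩ : Lam k n i) f else 0 := by
  rw [projT, Finsupp.lsum_single]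
  split
  · rw [Finsupp.lsingle_apply]
  · rfl

lemma iot_projT (i : ℕ) (z : Finset (TreeLeaf k n) →₀ MvPolynomial (TreeEdge k n) K)
    (h : ∀ s ∈ z.support, s.card = i) : iot K i (projT K i z) = z := by
  have hz : z = ∑ s ∈ z.support, Finsupp.single s (z s) := by
    conv_lhs => rw [← Finsupp.sum_single z]
    rfl
  calc iot K i (projT K i z)
      = ∑ s ∈ z.support, iot K i (projT K i (Finsupp.single s (z s))) := by
        conv_lhs => rw [hz]
        rw [map_sum, map_sum]
    _ = ∑ s ∈ z.support, Finsupp.single s (z s) := Finset.sum_congr rfl (fun s hs => by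
        rw [projT_single, dif_pos (h s hs), iot_single])
    _ = z := hz.symm

lemma supp_Dg (i : ℕ) (z : Finset (TreeLeaf k n) →₀ MvPolynomial (TreeEdge k n) K)
    (h : ∀ s ∈ z.support, s.card = i + 1) :
    ∀ t ∈ (Dg K z).support, t.card = i := by
  intro t ht
  have hz : z = ∑ s ∈ z.support, Finsupp.single s (z s) := by
    conv_lhs => rw [← Finsupp.sum_single z]
    rfl
  rw [hz, map_sum] at ht
  obtain ⟨s, hs, hts⟩ := Finset.mem_biUnion.mp (Finsupp.support_finset_sum ht)
  rw [Dg_single] at hts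
  obtain ⟨ℓ, hℓ, htℓ⟩ := Finset.mem_biUnion.mp (Finsupp.support_finset_sum hts)
  have := Finsupp.support_single_subset htℓ
  rw [Finset.mem_singleton] at this
  subst this
  rw [Finset.card_erase_of_mem hℓ, h s hs]
  omega

lemma Hval_support (s : Finset (TreeLeaf k n)) (a : TreeEdge k n →₀ ℕ)
    (t : Finset (TreeLeaf k n)) (ht : t ∈ (Hval K s a).support) :
    ∃ w, w ∉ s ∧ t = insert w s := by
  by_cases h1 : (FsetT a s).Nonempty
  · rw [Hval, dif_pos h1] at ht
    by_cases h2 : vsel (FsetT a s) h1 ∈ s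
    · rw [if_pos h2] at ht
      simp at ht
    · rw [if_neg h2] at ht
      have := Finsupp.support_single_subset ht
      rw [Finset.mem_singleton] at this
      exact ⟨vsel (FsetT a s) h1, h2, this⟩
  · rw [Hval, dif_neg h1] at ht
    simp at ht

lemma supp_Hg (i : ℕ) (z : Finset (TreeLeaf k n) →₀ MvPolynomial (TreeEdge k n) K)
    (h : ∀ s ∈ z.support, s.card = i) :
    ∀ t ∈ (Hg K z).support, t.card = i + 1 := by
  intro t ht
  have hz : z = ∑ s ∈ z.support, ∑ a ∈ (z s).support,
      Finsupp.single s (monomial a (coeff a (z s))) := by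
    conv_lhs => rw [← Finsupp.sum_single z]
    show ∑ s ∈ z.support, Finsupp.single s (z s) = _
    refine Finset.sum_congr rfl (fun s _ => ?_)
    have hms := map_sum (Finsupp.lsingle s : MvPolynomial (TreeEdge k n) K
        →ₗ[MvPolynomial (TreeEdge k n) K] _)
      (fun a => monomial a (coeff a (z s))) (z s).support
    simp only [Finsupp.lsingle_apply] at hms
    rw [← hms, support_sum_monomial_coeff]
  rw [hz, map_sum] at ht
  obtain ⟨s, hs, hts⟩ := Finset.mem_biUnion.mp (Finsupp.support_finset_sum ht)
  rw [map_sum] at hts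
  obtain ⟨a, _, hta⟩ := Finset.mem_biUnion.mp (Finsupp.support_finset_sum hts)
  rw [Hg_single_monomial] at hta
  have hta' : t ∈ (Hval K s a).support := Finset.mem_of_subset (Finsupp.support_smul) hta
  obtain ⟨w, hw, rfl⟩ := Hval_support K s a t hta'
  rw [Finset.card_insert_of_notMem hw, h s hs]

lemma supp_iot (i : ℕ) (x : Lam k n i →₀ MvPolynomial (TreeEdge k n) K) :
    ∀ s ∈ (iot K i x).support, s.card = i := by
  intro s hs
  rw [iot, Finsupp.lmapDomain_apply] at hs
  obtain ⟨p, -, rfl⟩ := Finset.mem_image.mp (Finsupp.mapDomain_support hs)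
  exact p.2

/-- The Taylor differential from level `i+1` to level `i`. -/
noncomputable def taylord (i : ℕ) :
    (Lam k n (i+1) →₀ MvPolynomial (TreeEdge k n) K) →ₗ[MvPolynomial (TreeEdge k n) K]
    (Lam k n i →₀ MvPolynomial (TreeEdge k n) K) :=
  projT K i ∘ₗ Dg K ∘ₗ iot K (i+1)

lemma iot_taylord (i : ℕ) (y : Lam k n (i+1) →₀ MvPolynomial (TreeEdge k n) K) :
    iot K i (taylord K i y) = Dg K (iot K (i+1) y) := by
  rw [taylord, LinearMap.comp_apply, LinearMap.comp_apply]
  exact iot_projT K i _ (supp_Dg K i _ (supp_iot K (i+1) y))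

lemma taylord_dd (i : ℕ) (x : Lam k n (i+2) →₀ MvPolynomial (TreeEdge k n) K) :
    taylord K i (taylord K (i+1) x) = 0 := by
  apply iot_inj K i
  rw [iot_taylord, map_zero]
  have h2 : Dg K (iot K (i+1) (taylord K (i+1) x)) = Dg K (Dg K (iot K (i+2) x)) := by
    rw [iot_taylord]
  rw [h2, Dg_Dg]

set_option synthInstance.maxHeartbeats 1000000 in
set_option maxHeartbeats 3000000 in
/-- The homotopy identity transported to the levels. -/
lemma main_id (i : ℕ) (x : Lam k n (i+1) →₀ MvPolynomial (TreeEdge k n) K) :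
    Dg K (Hg K (iot K (i+1) x)) + Hg K (Dg K (iot K (i+1) x)) = iot K (i+1) x := by
  have hmaps : (((Dg K).restrictScalars K ∘ₗ Hg K ∘ₗ ((iot K (i+1)).restrictScalars K)
      + Hg K ∘ₗ (Dg K).restrictScalars K ∘ₗ ((iot K (i+1)).restrictScalars K)) :
      (Lam k n (i+1) →₀ MvPolynomial (TreeEdge k n) K) →ₗ[K]
      (Finset (TreeLeaf k n) →₀ MvPolynomial (TreeEdge k n) K))
      = (iot K (i+1)).restrictScalars K := by
    apply Module.Basis.ext (Finsupp.basis fun _ : Lam k n (i+1) => basisMonomials (TreeEdge k n) K)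
    rintro ⟨p, a⟩
    have hb : (Finsupp.basis fun _ : Lam k n (i+1) => basisMonomials (TreeEdge k n) K) ⟨p, a⟩
        = Finsupp.single p (monomial a 1) := by
      rw [Finsupp.coe_basis]
      simp [coe_basisMonomials]
    rw [hb]
    simp only [LinearMap.add_apply, LinearMap.comp_apply, LinearMap.restrictScalars_apply]
    rw [iot_single]
    have hs : (p.val).Nonempty := Finset.card_pos.mp (by rw [p.2]; omega)
    exact taylor_homotopy K p.val hs a
  exact congrArg (fun f => f x) hmaps

/-- The empty-set index at level `0`. -/
noncomputable def e0 : Lam k n 0 := ⟨∅, Finset.card_empty⟩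

lemma lam0_eq (x : Lam k n 0 →₀ MvPolynomial (TreeEdge k n) K) :
    x = Finsupp.single (e0 (k := k) (n := n)) (x (e0 (k := k) (n := n))) := by
  ext u
  have hu : u = e0 (k := k) (n := n) := Subtype.ext (Finset.card_eq_zero.mp u.2)
  rw [hu, Finsupp.single_eq_same]

lemma sgn_singleton (ℓ : TreeLeaf k n) : sgn K ℓ {ℓ} = 1 :=
  sgn_eq_one K (fun x hx => le_of_eq (congrArg lidx (Finset.mem_singleton.mp hx).symm))

lemma d0_single (ℓ : TreeLeaf k n) (f : MvPolynomial (TreeEdge k n) K) :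
    taylord K 0 (Finsupp.single (⟨{ℓ}, Finset.card_singleton ℓ⟩ : Lam k n 1) f)
      = Finsupp.single (e0 (k := k) (n := n)) (f * monomial (DD {ℓ}) 1) := by
  rw [taylord, LinearMap.comp_apply, LinearMap.comp_apply, iot_single, Dg_single,
    Finset.sum_singleton, Finset.erase_singleton, DD_empty, tsub_zero, sgn_singleton,
    projT_single, dif_pos Finset.card_empty]
  rfl

/-- The Taylor resolution of `S / I_{k,n}` as an `FRes`. -/
noncomputable def taylorFRes : FRes (MvPolynomial (TreeEdge k n) K)
    ((MvPolynomial (TreeEdge k n) K) ⧸ (pathIdeal K k n)) (Lam k n) where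
  d := taylord K
  aug := (pathIdeal K k n).mkQ ∘ₗ Finsupp.lapply (e0 (k := k) (n := n))
  aug_surj := by
    intro q
    obtain ⟨f, hf⟩ := Submodule.mkQ_surjective _ q
    refine ⟨Finsupp.single (e0 (k := k) (n := n)) f, ?_⟩
    rw [LinearMap.comp_apply, Finsupp.lapply_apply, Finsupp.single_eq_same, hf]
  exact0 := by
    ext x
    simp only [LinearMap.mem_ker, LinearMap.mem_range]
    constructor
    · intro hx
      have hxI : x (e0 (k := k) (n := n)) ∈ pathIdeal K k n := by
        rw [LinearMap.comp_apply, Finsupp.lapply_apply, Submodule.mkQ_apply,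
          Submodule.Quotient.mk_eq_zero] at hx
        exact hx
      rw [pathIdeal] at hxI
      obtain ⟨c, hc⟩ := (Submodule.mem_span_range_iff_exists_fun _).mp hxI
      refine ⟨∑ ℓ : TreeLeaf k n,
        Finsupp.single (⟨{ℓ}, Finset.card_singleton ℓ⟩ : Lam k n 1) (c ℓ), ?_⟩
      rw [map_sum, Finset.sum_congr rfl (fun ℓ _ => d0_single K ℓ (c ℓ))]
      have hms := map_sum (Finsupp.lsingle (e0 (k := k) (n := n)) :
          MvPolynomial (TreeEdge k n) K →ₗ[MvPolynomial (TreeEdge k n) K] _)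
        (fun ℓ => c ℓ * monomial (DD {ℓ}) 1) Finset.univ
      simp only [Finsupp.lsingle_apply] at hms
      rw [← hms]
      have h2 : ∑ ℓ : TreeLeaf k n, c ℓ * monomial (DD {ℓ}) 1 = x (e0 (k := k) (n := n)) := by
        rw [← hc]
        refine Finset.sum_congr rfl (fun ℓ _ => ?_)
        rw [smul_eq_mul, pathMonomial_eq]
      rw [h2, ← lam0_eq]
    · rintro ⟨y, rfl⟩
      have hzero : ((((pathIdeal K k n).mkQ ∘ₗ Finsupp.lapply (e0 (k := k) (n := n))))
          ∘ₗ taylord K 0) = 0 := by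
        apply Finsupp.lhom_ext
        intro p f
        obtain ⟨ℓ, hℓ⟩ := Finset.card_eq_one.mp p.2
        have hp : p = ⟨{ℓ}, Finset.card_singleton ℓ⟩ := Subtype.ext hℓ
        rw [LinearMap.comp_apply, hp, d0_single, LinearMap.comp_apply,
          Finsupp.lapply_apply, Finsupp.single_eq_same, Submodule.mkQ_apply,
          LinearMap.zero_apply, Submodule.Quotient.mk_eq_zero, ← pathMonomial_eq]
        exact Ideal.mul_mem_left _ f (Ideal.subset_span ⟨ℓ, rfl⟩)
      exact congrArg (fun g => g y) hzero
  exact := by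
    intro i
    ext x
    simp only [LinearMap.mem_ker, LinearMap.mem_range]
    constructor
    · intro hx
      have hDgx : Dg K (iot K (i+1) x) = 0 := by
        rw [← iot_taylord, hx, map_zero]
      refine ⟨projT K (i+2) (Hg K (iot K (i+1) x)), ?_⟩
      apply iot_inj K (i+1)
      rw [iot_taylord]
      have hy : iot K (i+2) (projT K (i+2) (Hg K (iot K (i+1) x)))
          = Hg K (iot K (i+1) x) :=
        iot_projT _ _ _ (supp_Hg K (i+1) _ (supp_iot K (i+1) x))
      rw [hy]
      have hmain := main_id K i x
      rw [hDgx, map_zero, add_zero] at hmain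
      exact hmain
    · rintro ⟨y, rfl⟩
      exact taylord_dd K i y

lemma taylor_minimal_entries (hn : 1 ≤ n) (i : ℕ) (p : Lam k n (i+1)) (w : Lam k n i) :
    constantCoeff ((taylord K i (Finsupp.single p 1)) w) = 0 := by
  rw [taylord, LinearMap.comp_apply, LinearMap.comp_apply, iot_single, Dg_single, map_sum,
    Finset.sum_apply', map_sum]
  apply Finset.sum_eq_zero
  intro ℓ hℓ
  rw [one_mul, projT_single, dif_pos (show (p.val.erase ℓ).card = i by
    rw [Finset.card_erase_of_mem hℓ, p.2]; omega)]
  rw [Finsupp.single_apply]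
  split
  · rw [constantCoeff_monomial, if_neg (DD_erase_ne hn hℓ)]
  · rw [map_zero]

end TaylorAssemble

section FinalHelpers

variable {K : Type} [CommRing K] {R : Type} [CommRing R] [Algebra K R] {α β : Type}

lemma red_add (ε : R →ₐ[K] K) (f g : (α →₀ R) →ₗ[R] (β →₀ R)) :
    red K ε (f + g) = red K ε f + red K ε g := by
  apply LinearMap.ext
  intro x
  simp [red, map_add]

end FinalHelpers

section Eps

open MvPolynomial

variable (K : Type) [Field K] {k n : ℕ}

/-- `constantCoeff` as a `K`-algebra homomorphism. -/
noncomputable def epsAlg : MvPolynomial (TreeEdge k n) K →ₐ[K] K :=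
  { toRingHom := (constantCoeff : MvPolynomial (TreeEdge k n) K →+* K),
    commutes' := fun c => by rw [MvPolynomial.algebraMap_eq]; exact constantCoeff_C _ c }

lemma epsAlg_apply (x : MvPolynomial (TreeEdge k n) K) : epsAlg K x = constantCoeff x := rfl

lemma card_Lam (i : ℕ) : Fintype.card (Lam k n i) = Nat.choose (k ^ n) i := by
  rw [Fintype.card_finset_len]
  congr 1
  rw [Fintype.card_fun, Fintype.card_fin, Fintype.card_fin]

end Eps


/-- The Taylor complex of the path ideal `I_{k,n}` is a minimal free resolution:
for every minimal graded free resolution of `S/I_{k,n}`, the `i`-th total Betti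
number of `S/I_{k,n}` is `binomial (k^n) i` for `i ≥ 1` (equivalently, the `i`-th
total Betti number of the ideal `I_{k,n}` is `binomial (k^n) (i+1)`), the Betti
numbers vanish in homological degrees above `k^n`, and do not vanish in degree
`k^n`; i.e. the projective dimension of `I_{k,n}` is `k^n - 1` (the resolution of
`I_{k,n}` has length `k^n`). -/
theorem pathIdeal_taylor_minimal (K : Type) [Field K] (k n : ℕ) (hk : 1 ≤ k)
    (hn : 1 ≤ n) (b : ℕ → ℕ → ℕ)
    (hb : MinGradedFreeRes K (TreeEdge k n) (pathIdeal K k n) b) :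
    (∀ i : ℕ, 1 ≤ i → ∑ᶠ j : ℕ, b i j = Nat.choose (k ^ n) i) ∧
    (∀ i : ℕ, k ^ n < i → ∀ j : ℕ, b i j = 0) ∧
    (∃ j : ℕ, b (k ^ n) j ≠ 0) := by
  classical
  -- package the given resolution as an `FRes`
  let F : FRes (MvPolynomial (TreeEdge k n) K)
      ((MvPolynomial (TreeEdge k n) K) ⧸ (pathIdeal K k n))
      (fun i => Σ j : ℕ, Fin (b i j)) :=
    { d := hb.d, aug := hb.aug, aug_surj := hb.aug_surjective,
      exact0 := hb.exact_zero, exact := hb.exact }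
  let G := taylorFRes K (k := k) (n := n)
  -- comparison chain maps
  obtain ⟨φ, hφaug, hφcomm⟩ := exists_chainMap G F
  obtain ⟨ψ, hψaug, hψcomm⟩ := exists_chainMap F G
  -- homotopies on both sides
  obtain ⟨hH, hH0, hHs⟩ := exists_homotopy F (fun i => φ i ∘ₗ ψ i)
    (fun x => by rw [LinearMap.comp_apply, hφaug, hψaug])
    (fun i x => by rw [LinearMap.comp_apply, hφcomm, hψcomm]; rfl)
  obtain ⟨hG, hG0, hGs⟩ := exists_homotopy G (fun i => ψ i ∘ₗ φ i)
    (fun x => by rw [LinearMap.comp_apply, hψaug, hφaug])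
    (fun i x => by rw [LinearMap.comp_apply, hψcomm, hφcomm]; rfl)
  -- reductions mod the maximal ideal
  have hredF : ∀ i, red K (epsAlg K) (F.d i) = 0 := fun i =>
    red_eq_zero K (epsAlg K) _ (fun a b' => hb.minimal i a b')
  have hredG : ∀ i, red K (epsAlg K) (G.d i) = 0 := fun i =>
    red_eq_zero K (epsAlg K) _ (fun a b' => taylor_minimal_entries K hn i a b')
  -- `red` kills the homotopy terms
  have hkey : ∀ i, red K (epsAlg K) (φ i) ∘ₗ red K (epsAlg K) (ψ i) = LinearMap.id := by
    intro i
    cases i with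
    | zero =>
      have he : (φ 0 ∘ₗ ψ 0) - LinearMap.id = F.d 0 ∘ₗ hH 0 := by
        apply LinearMap.ext
        intro x
        have h3 := hH0 x
        simp only [LinearMap.sub_apply, LinearMap.id_apply, LinearMap.comp_apply] at h3 ⊢
        exact h3
      have h2 := congrArg (red K (epsAlg K)) he
      rw [red_sub, red_id, red_comp, red_comp, hredF 0, LinearMap.zero_comp] at h2
      exact sub_eq_zero.mp h2
    | succ i =>
      have he : (φ (i+1) ∘ₗ ψ (i+1)) - LinearMap.id
          = F.d (i+1) ∘ₗ hH (i+1) + hH i ∘ₗ F.d i := by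
        apply LinearMap.ext
        intro x
        have h3 := hHs i x
        simp only [LinearMap.sub_apply, LinearMap.id_apply, LinearMap.add_apply,
          LinearMap.comp_apply] at h3 ⊢
        exact h3
      have h2 := congrArg (red K (epsAlg K)) he
      rw [red_sub, red_id, red_add, red_comp, red_comp, red_comp, hredF (i+1), hredF i,
        LinearMap.zero_comp, LinearMap.comp_zero, add_zero] at h2
      exact sub_eq_zero.mp h2
  have hkey' : ∀ i, red K (epsAlg K) (ψ i) ∘ₗ red K (epsAlg K) (φ i) = LinearMap.id := by
    intro i
    cases i with
    | zero =>
      have he : (ψ 0 ∘ₗ φ 0) - LinearMap.id = G.d 0 ∘ₗ hG 0 := by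
        apply LinearMap.ext
        intro x
        have h3 := hG0 x
        simp only [LinearMap.sub_apply, LinearMap.id_apply, LinearMap.comp_apply] at h3 ⊢
        exact h3
      have h2 := congrArg (red K (epsAlg K)) he
      rw [red_sub, red_id, red_comp, red_comp, hredG 0, LinearMap.zero_comp] at h2
      exact sub_eq_zero.mp h2
    | succ i =>
      have he : (ψ (i+1) ∘ₗ φ (i+1)) - LinearMap.id
          = G.d (i+1) ∘ₗ hG (i+1) + hG i ∘ₗ G.d i := by
        apply LinearMap.ext
        intro x
        have h3 := hGs i x
        simp only [LinearMap.sub_apply, LinearMap.id_apply, LinearMap.add_apply,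
          LinearMap.comp_apply] at h3 ⊢
        exact h3
      have h2 := congrArg (red K (epsAlg K)) he
      rw [red_sub, red_id, red_add, red_comp, red_comp, red_comp, hredG (i+1), hredG i,
        LinearMap.zero_comp, LinearMap.comp_zero, add_zero] at h2
      exact sub_eq_zero.mp h2
  -- linear equivalences of the reduced levels
  let eqv : ∀ i, ((Σ j : ℕ, Fin (b i j)) →₀ K) ≃ₗ[K] (Lam k n i →₀ K) := fun i =>
    LinearEquiv.ofLinear (red K (epsAlg K) (ψ i)) (red K (epsAlg K) (φ i))
      (hkey' i) (hkey i)
  -- Betti number computation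
  have hcard : ∀ i, ∑ᶠ j, b i j = Nat.choose (k ^ n) i := by
    intro i
    have hfin : (Function.support (b i)).Finite := by
      have hsub : Function.support (b i) ⊆
          (fun j => ((i, j) : ℕ × ℕ)) ⁻¹' (Function.support fun p : ℕ × ℕ => b p.1 p.2) :=
        fun j hj => hj
      exact (hb.betti_finite.preimage (Function.Injective.injOn
        (fun a a' h => (Prod.mk.injEq _ _ _ _).mp h |>.2))).subset hsub
    have efib : (Σ j : ℕ, Fin (b i j)) ≃ (Σ j : hfin.toFinset, Fin (b i (j : ℕ))) :=
      { toFun := fun p => ⟨⟨p.1, hfin.mem_toFinset.mpr (by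
          have := p.2.2
          simp only [Function.mem_support]
          omega)⟩, p.2⟩
        invFun := fun p => ⟨p.1.1, p.2⟩
        left_inv := fun p => rfl
        right_inv := fun p => rfl }
    haveI : Fintype (Σ j : ℕ, Fin (b i j)) := Fintype.ofEquiv _ efib.symm
    have hcard1 : Fintype.card (Σ j : ℕ, Fin (b i j)) = ∑ j ∈ hfin.toFinset, b i j := by
      rw [Fintype.card_congr efib, Fintype.card_sigma]
      simp only [Fintype.card_fin]
      exact Finset.sum_coe_sort hfin.toFinset (fun j => b i j)
    have hfs : ∑ᶠ j, b i j = ∑ j ∈ hfin.toFinset, b i j := by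
      apply finsum_eq_sum_of_support_subset
      rw [Set.Finite.coe_toFinset]
    haveI hfd2 : FiniteDimensional K (Lam k n i →₀ K) :=
      Module.Finite.of_basis (Finsupp.basisSingleOne)
    have hrank1 : Module.finrank K ((Σ j : ℕ, Fin (b i j)) →₀ K)
        = Fintype.card (Σ j : ℕ, Fin (b i j)) :=
      Module.finrank_eq_card_basis Finsupp.basisSingleOne
    have hrank2 : Module.finrank K ((Σ j : ℕ, Fin (b i j)) →₀ K)
        = Module.finrank K (Lam k n i →₀ K) := (eqv i).finrank_eq
    have hrank3 : Module.finrank K (Lam k n i →₀ K) = Fintype.card (Lam k n i) :=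
      Module.finrank_eq_card_basis Finsupp.basisSingleOne
    rw [hfs, ← hcard1, ← hrank1, hrank2, hrank3, card_Lam]
  refine ⟨fun i _ => hcard i, ?_, ?_⟩
  · intro i hi j
    have h0 : ∑ᶠ j, b i j = 0 := by
      rw [hcard i, Nat.choose_eq_zero_of_lt hi]
    have hfin : (Function.support (b i)).Finite := by
      have hsub : Function.support (b i) ⊆
          (fun j => ((i, j) : ℕ × ℕ)) ⁻¹' (Function.support fun p : ℕ × ℕ => b p.1 p.2) :=
        fun j hj => hj
      exact (hb.betti_finite.preimage (Function.Injective.injOn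
        (fun a a' h => (Prod.mk.injEq _ _ _ _).mp h |>.2))).subset hsub
    have hle : b i j ≤ ∑ᶠ j, b i j := single_le_finsum j hfin (fun j => Nat.zero_le _)
    omega
  · by_contra hno
    push_neg at hno
    have h0 : ∑ᶠ j, b (k ^ n) j = 0 := finsum_eq_zero_of_forall_eq_zero hno
    rw [hcard (k ^ n), Nat.choose_self] at h0
    omega
end

section
/- The path ideal of a graph G (with source q and target set L) equals the intersection, over all minimal cuts C separating q from all of L, of the monomial prime ideals generated by the variables of the edges in C; in particular the path ideal is the Alexander dual of the cut ideal. -/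
open MvPolynomial

open scoped Classical in
/-- The squarefree monomial of a walk `w` in the polynomial ring with one variable
for each edge of `G`. -/
noncomputable def walkMonomial (K : Type) [Field K] {V : Type} [DecidableEq V]
    {G : SimpleGraph V} {a c : V} (w : G.Walk a c) :
    MvPolynomial G.edgeSet K :=
  ∏ e ∈ w.edges.toFinset,
    if h : e ∈ G.edgeSet then X (⟨e, h⟩ : G.edgeSet) else 1

/-- The path ideal of `G` with source `q` and target set `L`: it is generated by
the monomials of the paths connecting `q` to some vertex of `L`. -/
noncomputable def graphPathIdeal (K : Type) [Field K] {V : Type} [DecidableEq V]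
    (G : SimpleGraph V) (q : V) (L : Set V) : Ideal (MvPolynomial G.edgeSet K) :=
  Ideal.span { m | ∃ l : V, l ∈ L ∧ ∃ w : G.Walk q l, w.IsPath ∧ m = walkMonomial K w }

/-- The set of edges of `G` with one endpoint in `A` and the other outside `A`. -/
def cutEdges {V : Type} (G : SimpleGraph V) (A : Set V) : Set G.edgeSet :=
  { e | ∃ u v : V, (e : Sym2 V) = s(u, v) ∧ u ∈ A ∧ v ∉ A }

/-- `C` is a cut separating `q` from `L`: `C = E(A, Aᶜ)` for some vertex set `A`
containing `L` with `q ∉ A`. -/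
def IsCut {V : Type} (G : SimpleGraph V) (q : V) (L : Set V) (C : Set G.edgeSet) : Prop :=
  ∃ A : Set V, L ⊆ A ∧ q ∉ A ∧ C = cutEdges G A

/-- `C` is a minimal cut separating `q` from `L`. -/
def IsMinimalCut {V : Type} (G : SimpleGraph V) (q : V) (L : Set V)
    (C : Set G.edgeSet) : Prop :=
  IsCut G q L C ∧ ∀ C' : Set G.edgeSet, IsCut G q L C' → C' ⊆ C → C' = C

open scoped Classical

variable {K : Type} [Field K] {V : Type} [DecidableEq V] {G : SimpleGraph V}

noncomputable def walkEdgeFinset {a c : V} (w : G.Walk a c) : Finset G.edgeSet :=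
  w.edges.toFinset.attach.image fun e =>
    (⟨e.1, w.edges_subset_edgeSet (List.mem_toFinset.mp e.2)⟩ : G.edgeSet)

lemma mem_walkEdgeFinset {a c : V} (w : G.Walk a c) (e : G.edgeSet) :
    e ∈ walkEdgeFinset w ↔ (e : Sym2 V) ∈ w.edges := by
  constructor
  · intro h
    obtain ⟨x, hx, rfl⟩ := Finset.mem_image.mp h
    exact List.mem_toFinset.mp x.2
  · intro h
    exact Finset.mem_image.mpr ⟨⟨e.1, List.mem_toFinset.mpr h⟩, Finset.mem_attach _ _,
      Subtype.ext rfl⟩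

lemma walkMonomial_eq {a c : V} (w : G.Walk a c) :
    walkMonomial K w = ∏ e ∈ walkEdgeFinset w, (X e : MvPolynomial G.edgeSet K) := by
  have h := Finset.prod_image (s := w.edges.toFinset.attach)
    (g := fun e => (⟨e.1, w.edges_subset_edgeSet (List.mem_toFinset.mp e.2)⟩ : G.edgeSet))
    (f := fun e => (X e : MvPolynomial G.edgeSet K))
    (by intro x _ y _ h; simp only [Subtype.mk.injEq] at h; exact Subtype.ext h)
  rw [walkEdgeFinset, h, walkMonomial, ← Finset.prod_attach (s := w.edges.toFinset)]
  exact Finset.prod_congr rfl fun e _ => dif_pos _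

lemma prod_X_eq_monomial (s : Finset G.edgeSet) :
    (∏ e ∈ s, (X e : MvPolynomial G.edgeSet K)) =
      monomial (∑ e ∈ s, Finsupp.single e 1) 1 := by
  classical
  induction s using Finset.induction_on with
  | empty => simp
  | insert _ _ h ih =>
    rw [Finset.prod_insert h, Finset.sum_insert h, ih, X, monomial_mul, one_mul]

lemma cut_cross {A : Set V} {a c : V} (w : G.Walk a c) (ha : a ∉ A) (hc : c ∈ A) :
    ∃ e ∈ walkEdgeFinset w, e ∈ cutEdges G A := by
  obtain ⟨d, hd, hd1, hd2⟩ := w.exists_boundary_dart Aᶜ ha (by simpa using hc)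
  have hedge : d.edge ∈ w.edges := by
    rw [SimpleGraph.Walk.edges]
    exact List.mem_map_of_mem hd
  refine ⟨⟨d.edge, d.edge_mem⟩, (mem_walkEdgeFinset w _).mpr hedge,
    d.snd, d.fst, ?_, not_not.mp (by simpa using hd2), hd1⟩
  show d.edge = s(d.snd, d.fst)
  rw [SimpleGraph.Dart.edge, Sym2.eq_swap]

lemma exists_minimalCut_subset [Fintype V] {q : V} {L : Set V} {C : Set G.edgeSet}
    (hC : IsCut G q L C) : ∃ C₀, IsMinimalCut G q L C₀ ∧ C₀ ⊆ C := by
  have hfin : {D : Set G.edgeSet | IsCut G q L D ∧ D ⊆ C}.Finite := Set.toFinite _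
  obtain ⟨D, hD, hmin⟩ := Set.Finite.exists_minimalFor id _ hfin ⟨C, hC, subset_rfl⟩
  exact ⟨D, ⟨hD.1, fun C' hC' hsub => le_antisymm hsub (hmin ⟨hC', hsub.trans hD.2⟩ hsub)⟩, hD.2⟩

lemma exists_path_of_meets_cuts {q : V} {L : Set V}
    (F : Set G.edgeSet)
    (hF : ∀ C, IsCut G q L C → ∃ e ∈ C, e ∈ F) :
    ∃ l ∈ L, ∃ w : G.Walk q l, w.IsPath ∧ ∀ e ∈ walkEdgeFinset w, e ∈ F := by
  set H := SimpleGraph.fromEdgeSet (Subtype.val '' F) with hHdef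
  have hHE : H.edgeSet ⊆ Subtype.val '' F := by
    rw [hHdef, SimpleGraph.edgeSet_fromEdgeSet]; exact Set.diff_subset
  by_cases hre : ∃ l ∈ L, H.Reachable q l
  · obtain ⟨l, hl, hr⟩ := hre
    obtain ⟨p⟩ := hr
    set p' : H.Walk q l := (p.toPath : H.Walk q l) with hp'
    have hsub : ∀ e ∈ p'.edges, e ∈ G.edgeSet := by
      intro e he
      obtain ⟨e', _, rfl⟩ := hHE (p'.edges_subset_edgeSet he)
      exact e'.2
    refine ⟨l, hl, p'.transfer G hsub, p.toPath.2.transfer _, ?_⟩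
    intro e he
    rw [mem_walkEdgeFinset, SimpleGraph.Walk.edges_transfer] at he
    obtain ⟨e', he', heq⟩ := hHE (p'.edges_subset_edgeSet he)
    exact (Subtype.ext heq : e' = e) ▸ he'
  · push_neg at hre
    obtain ⟨e, heC, heF⟩ := hF (cutEdges G {v | ¬ H.Reachable q v})
      ⟨_, fun l hl h => hre l hl h, fun h => h (SimpleGraph.Reachable.refl q), rfl⟩
    obtain ⟨u, v, huv, hu, hv⟩ := heC
    have hGadj : G.Adj u v := by
      rw [← SimpleGraph.mem_edgeSet, ← huv]; exact e.2
    have hHadj : H.Adj v u := by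
      rw [hHdef, SimpleGraph.fromEdgeSet_adj]
      refine ⟨?_, hGadj.ne.symm⟩
      rw [← Sym2.eq_swap, ← huv]
      exact ⟨e, heF, rfl⟩
    exact absurd ((not_not.mp hv).trans hHadj.reachable) hu


/-- The path ideal of `G` (source `q`, targets `L`) equals the intersection, over
all minimal cuts `C` separating `q` from all of `L`, of the monomial prime ideals
generated by the variables of the edges of `C`; in particular (by the definition of
the Alexander dual of the squarefree cut ideal generated by the minimal-cut
monomials) the path ideal is the Alexander dual of the cut ideal. -/
theorem graphPathIdeal_eq_iInf_minimalCuts (K : Type) [Field K] {V : Type}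
    [Fintype V] [DecidableEq V] (G : SimpleGraph V) (hG : G.Connected)
    (q : V) (L : Set V) (hL : L.Nonempty) (hq : q ∉ L) :
    graphPathIdeal K G q L =
      ⨅ (C : Set G.edgeSet) (_ : IsMinimalCut G q L C),
        Ideal.span ((X : G.edgeSet → MvPolynomial G.edgeSet K) '' C) := by
  classical
  apply le_antisymm
  · rw [graphPathIdeal, Ideal.span_le]
    rintro m ⟨l, hl, w, hw, rfl⟩
    rw [SetLike.mem_coe, Submodule.mem_iInf]
    intro C
    rw [Submodule.mem_iInf]
    intro hC
    obtain ⟨A, hLA, hqA, rfl⟩ := hC.1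
    obtain ⟨e, hew, heC⟩ := cut_cross w hqA (hLA hl)
    rw [walkMonomial_eq, ← Finset.mul_prod_erase _ _ hew]
    exact Ideal.mul_mem_right _ _ (Ideal.subset_span ⟨e, heC, rfl⟩)
  · intro f hf
    rw [graphPathIdeal, ← f.support_sum_monomial_coeff]
    apply Ideal.sum_mem
    intro m hm
    have hmeet : ∀ C, IsCut G q L C → ∃ e ∈ C, e ∈ {e : G.edgeSet | m e ≠ 0} := by
      intro C hC
      obtain ⟨C₀, hC₀, hsubC⟩ := exists_minimalCut_subset hC
      have h1 := (Submodule.mem_iInf _).mp hf C₀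
      have h2 := (Submodule.mem_iInf _).mp h1 hC₀
      rw [mem_ideal_span_X_image] at h2
      obtain ⟨e, he, hne⟩ := h2 m hm
      exact ⟨e, hsubC he, hne⟩
    obtain ⟨l, hl, w, hw, hwF⟩ := exists_path_of_meets_cuts _ hmeet
    set d : G.edgeSet →₀ ℕ := ∑ e ∈ walkEdgeFinset w, Finsupp.single e 1 with hd
    have hdle : d ≤ m := by
      rw [Finsupp.le_def]
      intro e
      rw [hd, Finsupp.finset_sum_apply]
      by_cases he : e ∈ walkEdgeFinset w
      · have : (∑ e' ∈ walkEdgeFinset w, Finsupp.single e' 1 e) = 1 := by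
          rw [Finset.sum_eq_single e]
          · simp
          · intro b _ hb; simp [Finsupp.single_apply, hb]
          · exact fun h => absurd he h
        rw [this]
        exact Nat.one_le_iff_ne_zero.mpr (hwF e he)
      · have : (∑ e' ∈ walkEdgeFinset w, Finsupp.single e' 1 e) = 0 := by
          apply Finset.sum_eq_zero
          intro b hb
          have : b ≠ e := fun h => he (h ▸ hb)
          simp [Finsupp.single_apply, this]
        simp [this]
    have key : (monomial m) (coeff m f) =
        walkMonomial K w * (monomial (m - d)) (coeff m f) := by
      rw [walkMonomial_eq, prod_X_eq_monomial, ← hd, monomial_mul, one_mul,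
        add_tsub_cancel_of_le hdle]
    rw [key]
    exact Ideal.mul_mem_right _ _ (Ideal.subset_span ⟨l, hl, w, hw, rfl⟩)
end
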